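/- Fix n ≥ 3 and j with 2 ≤ j ≤ n−1, and let U(j) be the deterministic automaton over the alphabet {s_1,…,s_{n−1}} with states H_{j−1},…,H_{n−1}, I_{j−1},…,I_{n−1} and a sink state ⊥; initial state H_{j−1}; accepting states all the H_k and I_k; and transitions: from H_k the letter s_k leads to I_k, the letter s_{k+1} leads to H_{k+1} (when k+1 ≤ n−1); from I_k the letter s_{k+1} leads to ⊥ (when k+1 ≤ n−1); every other letter loops on the current state, and ⊥ is absorbing. Then for a permutation σ of {1,…,n}: σ admits a reduced word accepted by U(j) if and only if there are no positions p < q < r with σ(p) = j, σ(q) > j and σ(r) < j (i.e., σ avoids the pattern bca with b = j). -/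

import Mathlib

/-- States of the automaton `U(j)`: states `H k`, states `I k`, and a
rejecting sink. -/
inductive AState : Type
  | H : ℕ → AState
  | I : ℕ → AState
  | sink : AState
  deriving DecidableEq

/-- The transition function of the automaton `U(j)`: reading letter `s_l`
(encoded by its index `l`), from `H k` the letter `s_k` leads to `I k` and the
letter `s_{k+1}` leads to `H (k+1)`; from `I k` the letter `s_{k+1}` leads to
the sink; every other letter loops, and the sink is absorbing. -/
def aStep : AState → ℕ → AState
  | AState.H k, l =>
      if l = k then AState.I k else if l = k + 1 then AState.H (k + 1) else AState.H k
  | AState.I k, l => if l = k + 1 then AState.sink else AState.I k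
  | AState.sink, _ => AState.sink

/-- A word `w` over the alphabet `{s_1, …, s_{n-1}}` (letters encoded by their
indices) is accepted by `U(j)`: reading it from the initial state `H (j-1)`
does not end in the sink (all states `H k`, `I k` are accepting). -/
def AcceptedByU (j : ℕ) (w : List ℕ) : Prop :=
  w.foldl aStep (AState.H (j - 1)) ≠ AState.sink

/-- The adjacent transposition `s_l` of `{1,…,n}` exchanging the values `l`
and `l+1` (which on `Fin n`, whose element `i` encodes the value `i+1`,
swaps the indices `l-1` and `l`). -/
def adjTransposition (n : ℕ) (l : ℕ) : Equiv.Perm (Fin n) :=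
  if h : 1 ≤ l ∧ l < n then Equiv.swap ⟨l - 1, by omega⟩ ⟨l, h.2⟩ else 1

/-- The number of inversions of `σ`: pairs of positions `p < q` with
`σ p > σ q`. -/
def invCount (n : ℕ) (σ : Equiv.Perm (Fin n)) : ℕ :=
  (Finset.univ.filter fun p : Fin n × Fin n => p.1 < p.2 ∧ σ p.2 < σ p.1).card

-- ====== auxiliary development ======

def PhiPat (n K : ℕ) (σ : Equiv.Perm (Fin n)) : Prop :=
  ∃ p q r : Fin n, p < q ∧ q < r ∧ (σ p : ℕ) = K ∧ K < (σ q : ℕ) ∧ (σ r : ℕ) < K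

def PsiPat (n K : ℕ) (σ : Equiv.Perm (Fin n)) : Prop :=
  ∃ x y : Fin n, x < y ∧ K < (σ x : ℕ) ∧ (σ y : ℕ) ≤ K

lemma swap_val {n : ℕ} (a b x : Fin n) (hab : (a : ℕ) + 1 = (b : ℕ)) :
    ((Equiv.swap a b x : Fin n) : ℕ) =
      if (x : ℕ) = (a : ℕ) then (b : ℕ) else if (x : ℕ) = (b : ℕ) then (a : ℕ) else (x : ℕ) := by
  rcases eq_or_ne x a with rfl | hxa
  · simp [Equiv.swap_apply_left]
  · have hxa' : (x : ℕ) ≠ (a : ℕ) := fun hh => hxa (Fin.val_injective hh)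
    rcases eq_or_ne x b with rfl | hxb
    · simp [Equiv.swap_apply_right, hxa']
    · have hxb' : (x : ℕ) ≠ (b : ℕ) := fun hh => hxb (Fin.val_injective hh)
      simp [Equiv.swap_apply_of_ne_of_ne hxa hxb, hxa', hxb']

lemma invCount_swap_succ {n : ℕ} (π : Equiv.Perm (Fin n)) (a b : Fin n)
    (hab : (a : ℕ) + 1 = (b : ℕ)) (h : π⁻¹ a < π⁻¹ b) :
    invCount n (Equiv.swap a b * π) = invCount n π + 1 := by
  have hmem : ∀ (x : Fin n) (p : Fin n), (π p : ℕ) = (x : ℕ) ↔ (p : ℕ) = ((π⁻¹ x : Fin n) : ℕ) := by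
    intro x p
    constructor
    · intro hh
      have : π p = x := Fin.val_injective hh
      rw [← this, Equiv.Perm.coe_inv, Equiv.symm_apply_apply]
    · intro hh
      have : p = π⁻¹ x := Fin.val_injective hh
      rw [this, Equiv.Perm.coe_inv, Equiv.apply_symm_apply]
  have hkey : (Finset.univ.filter fun p : Fin n × Fin n =>
        p.1 < p.2 ∧ (Equiv.swap a b * π) p.2 < (Equiv.swap a b * π) p.1)
      = insert (π⁻¹ a, π⁻¹ b)
          (Finset.univ.filter fun p : Fin n × Fin n => p.1 < p.2 ∧ π p.2 < π p.1) := by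
    ext x
    obtain ⟨p, q⟩ := x
    simp only [Finset.mem_filter, Finset.mem_univ, true_and, Finset.mem_insert, Prod.mk.injEq]
    have e1 : (Equiv.swap a b * π) p = Equiv.swap a b (π p) := rfl
    have e2 : (Equiv.swap a b * π) q = Equiv.swap a b (π q) := rfl
    rw [e1, e2, Fin.lt_def, Fin.lt_def, Fin.lt_def, Fin.ext_iff, Fin.ext_iff,
      swap_val a b (π p) hab, swap_val a b (π q) hab]
    have hPA := hmem a p
    have hPB := hmem b p
    have hQA := hmem a q
    have hQB := hmem b q
    have h' : ((π⁻¹ a : Fin n) : ℕ) < ((π⁻¹ b : Fin n) : ℕ) := h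
    split_ifs <;> omega
  rw [invCount, invCount, hkey, Finset.card_insert_of_notMem]
  simp only [Finset.mem_filter, Finset.mem_univ, true_and, not_and]
  intro _
  simp only [Equiv.Perm.coe_inv, Equiv.apply_symm_apply]
  rw [Fin.lt_def]
  omega

lemma swap_mul_cancel {n : ℕ} (a b : Fin n) (τ : Equiv.Perm (Fin n)) :
    Equiv.swap a b * (Equiv.swap a b * τ) = τ := by
  rw [← mul_assoc, Equiv.swap_mul_self, one_mul]

lemma inv_swap_mul_a {n : ℕ} (a b : Fin n) (τ : Equiv.Perm (Fin n)) :
    (Equiv.swap a b * τ)⁻¹ a = τ⁻¹ b := by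
  simp [mul_inv_rev, Equiv.Perm.mul_apply]

lemma inv_swap_mul_b {n : ℕ} (a b : Fin n) (τ : Equiv.Perm (Fin n)) :
    (Equiv.swap a b * τ)⁻¹ b = τ⁻¹ a := by
  simp [mul_inv_rev, Equiv.Perm.mul_apply]

lemma invCount_swap_cases {n : ℕ} (a b : Fin n) (hab : (a : ℕ) + 1 = (b : ℕ))
    (τ : Equiv.Perm (Fin n)) :
    (τ⁻¹ a < τ⁻¹ b ∧ invCount n (Equiv.swap a b * τ) = invCount n τ + 1) ∨
    (τ⁻¹ b < τ⁻¹ a ∧ invCount n τ = invCount n (Equiv.swap a b * τ) + 1) := by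
  rcases lt_trichotomy (τ⁻¹ a) (τ⁻¹ b) with h | h | h
  · exact Or.inl ⟨h, invCount_swap_succ τ a b hab h⟩
  · exfalso
    have : a = b := (Equiv.injective τ⁻¹) h
    rw [Fin.ext_iff] at this
    omega
  · refine Or.inr ⟨h, ?_⟩
    have hcond : (Equiv.swap a b * τ)⁻¹ a < (Equiv.swap a b * τ)⁻¹ b := by
      rw [inv_swap_mul_a, inv_swap_mul_b]; exact h
    have := invCount_swap_succ (Equiv.swap a b * τ) a b hab hcond
    rw [swap_mul_cancel] at this
    omega

lemma invCount_one (n : ℕ) : invCount n (1 : Equiv.Perm (Fin n)) = 0 := by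
  rw [invCount, Finset.card_eq_zero, Finset.filter_eq_empty_iff]
  rintro ⟨p, q⟩ _
  simp only [Equiv.Perm.one_apply]
  rw [Fin.lt_def, Fin.lt_def]
  omega

lemma adjT_eq {n : ℕ} (a b : Fin n) (hab : (a : ℕ) + 1 = (b : ℕ)) :
    adjTransposition n (b : ℕ) = Equiv.swap a b := by
  have h1 : 1 ≤ (b : ℕ) := by omega
  rw [adjTransposition, dif_pos ⟨h1, b.isLt⟩]
  congr 1
  rw [Fin.ext_iff]; simp; omega

lemma prod_invCount_le (n : ℕ) (w : List ℕ) (hw : ∀ l ∈ w, 1 ≤ l ∧ l ≤ n - 1) :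
    invCount n (w.map (adjTransposition n)).prod ≤ w.length := by
  induction w with
  | nil => simp [invCount_one]
  | cons l w ih =>
    obtain ⟨h1, h2'⟩ := hw l (List.mem_cons_self (a := l) (l := w))
    have h2 : l < n := by omega
    set a : Fin n := ⟨l - 1, by omega⟩ with ha
    set b : Fin n := ⟨l, h2⟩ with hb
    have hab : (a : ℕ) + 1 = (b : ℕ) := by simp [ha, hb]; omega
    have hadj : adjTransposition n l = Equiv.swap a b := adjT_eq a b hab
    rw [List.map_cons, List.prod_cons, hadj, List.length_cons]
    have ihh := ih (fun x hx => hw x (List.mem_cons_of_mem l hx))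
    rcases invCount_swap_cases a b hab (w.map (adjTransposition n)).prod with ⟨_, hc⟩ | ⟨_, hc⟩ <;>
      omega

section Transfer

variable {n K : ℕ} (a b : Fin n)

lemma ρval (hab : (a : ℕ) + 1 = (b : ℕ)) (τ : Equiv.Perm (Fin n)) (t : Fin n) :
    (τ t : ℕ) = if ((Equiv.swap a b * τ) t : ℕ) = (a : ℕ) then (b : ℕ)
      else if ((Equiv.swap a b * τ) t : ℕ) = (b : ℕ) then (a : ℕ)
      else ((Equiv.swap a b * τ) t : ℕ) := by
  rw [← swap_val a b _ hab]
  simp [Equiv.Perm.mul_apply, Equiv.swap_apply_self]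

lemma μval (hab : (a : ℕ) + 1 = (b : ℕ)) (τ : Equiv.Perm (Fin n)) (t : Fin n) :
    ((Equiv.swap a b * τ) t : ℕ) = if (τ t : ℕ) = (a : ℕ) then (b : ℕ)
      else if (τ t : ℕ) = (b : ℕ) then (a : ℕ) else (τ t : ℕ) := by
  rw [← swap_val a b _ hab]
  rfl

-- T4
lemma psi_step (hab : (a : ℕ) + 1 = (b : ℕ)) (hbK : (b : ℕ) ≠ K + 1)
    (τ : Equiv.Perm (Fin n)) (h : PsiPat n K (Equiv.swap a b * τ)) : PsiPat n K τ := by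
  obtain ⟨x, y, hxy, hx, hy⟩ := h
  refine ⟨x, y, hxy, ?_, ?_⟩
  · rw [ρval a b hab τ x]; split_ifs <;> omega
  · rw [ρval a b hab τ y]; split_ifs <;> omega

-- T1
lemma phi_to_psi (hab : (a : ℕ) + 1 = (b : ℕ)) (hbK : (b : ℕ) = K)
    (τ : Equiv.Perm (Fin n)) (h : PhiPat n K (Equiv.swap a b * τ)) : PsiPat n K τ := by
  obtain ⟨p, q, r, hpq, hqr, h3, h4, h5⟩ := h
  refine ⟨q, r, hqr, ?_, ?_⟩
  · rw [ρval a b hab τ q]; split_ifs <;> omega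
  · rw [ρval a b hab τ r]; split_ifs <;> omega

-- T3
lemma phi_loop (hab : (a : ℕ) + 1 = (b : ℕ)) (hb1 : (b : ℕ) ≠ K) (hb2 : (b : ℕ) ≠ K + 1)
    (τ : Equiv.Perm (Fin n)) (h : PhiPat n K (Equiv.swap a b * τ)) : PhiPat n K τ := by
  obtain ⟨p, q, r, hpq, hqr, h3, h4, h5⟩ := h
  refine ⟨p, q, r, hpq, hqr, ?_, ?_, ?_⟩
  · rw [ρval a b hab τ p]; split_ifs <;> omega
  · rw [ρval a b hab τ q]; split_ifs <;> omega
  · rw [ρval a b hab τ r]; split_ifs <;> omega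

-- T2
lemma phi_climb (hab : (a : ℕ) + 1 = (b : ℕ)) (haK : (a : ℕ) = K)
    (τ : Equiv.Perm (Fin n)) (hinv : τ⁻¹ a < τ⁻¹ b)
    (h : PhiPat n K (Equiv.swap a b * τ)) : PhiPat n (K + 1) τ := by
  obtain ⟨p, q, r, hpq, hqr, h3, h4, h5⟩ := h
  have hqb : ((Equiv.swap a b * τ) q : ℕ) ≠ (b : ℕ) := by
    intro hh
    have hqb' : (Equiv.swap a b * τ) q = b := Fin.val_injective hh
    have hpa : (Equiv.swap a b * τ) p = a := Fin.val_injective (by omega)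
    have hq : q = (Equiv.swap a b * τ)⁻¹ b := Equiv.Perm.eq_inv_iff_eq.mpr hqb'
    have hp : p = (Equiv.swap a b * τ)⁻¹ a := Equiv.Perm.eq_inv_iff_eq.mpr hpa
    rw [inv_swap_mul_b] at hq
    rw [inv_swap_mul_a] at hp
    rw [hq, hp] at hpq
    exact absurd hinv (not_lt.mpr (le_of_lt hpq))
  refine ⟨p, q, r, hpq, hqr, ?_, ?_, ?_⟩
  · rw [ρval a b hab τ p]; split_ifs <;> omega
  · rw [ρval a b hab τ q]; split_ifs <;> omega
  · rw [ρval a b hab τ r]; split_ifs <;> omega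

-- T2'
lemma phi_climb' (hab : (a : ℕ) + 1 = (b : ℕ)) (haK : (a : ℕ) = K)
    (τ : Equiv.Perm (Fin n)) (hinv : τ⁻¹ a < τ⁻¹ b)
    (h : PhiPat n (K + 1) τ) : PhiPat n K (Equiv.swap a b * τ) := by
  obtain ⟨p, q, r, hpq, hqr, h3, h4, h5⟩ := h
  have hra : (τ r : ℕ) ≠ (a : ℕ) := by
    intro hh
    have hra' : τ r = a := Fin.val_injective hh
    have hpb : τ p = b := Fin.val_injective (by omega)
    have hr : r = τ⁻¹ a := Equiv.Perm.eq_inv_iff_eq.mpr hra'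
    have hp : p = τ⁻¹ b := Equiv.Perm.eq_inv_iff_eq.mpr hpb
    have : p < r := lt_trans hpq hqr
    rw [hr, hp] at this
    exact absurd hinv (not_lt.mpr (le_of_lt this))
  refine ⟨p, q, r, hpq, hqr, ?_, ?_, ?_⟩
  · rw [μval a b hab τ p]; split_ifs <;> omega
  · rw [μval a b hab τ q]; split_ifs <;> omega
  · rw [μval a b hab τ r]; split_ifs <;> omega

end Transfer

lemma aStep_sink (l : ℕ) : aStep AState.sink l = AState.sink := rfl

lemma sink_foldl (w : List ℕ) : w.foldl aStep AState.sink = AState.sink := by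
  induction w with
  | nil => rfl
  | cons l w ih => rw [List.foldl_cons, aStep_sink]; exact ih

lemma aStep_H_self (k : ℕ) : aStep (AState.H k) k = AState.I k := by
  simp [aStep]

lemma aStep_H_succ (k : ℕ) : aStep (AState.H k) (k + 1) = AState.H (k + 1) := by
  simp [aStep]

lemma aStep_H_other (k l : ℕ) (h1 : l ≠ k) (h2 : l ≠ k + 1) :
    aStep (AState.H k) l = AState.H k := by
  simp [aStep, h1, h2]

lemma aStep_I_other (k l : ℕ) (h : l ≠ k + 1) : aStep (AState.I k) l = AState.I k := by
  simp [aStep, h]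

lemma aStep_I_kill (k : ℕ) : aStep (AState.I k) (k + 1) = AState.sink := by
  simp [aStep]

lemma strictmono_perm_eq_one {n : ℕ} (f : Equiv.Perm (Fin n))
    (hf : ∀ p q : Fin n, p < q → f p < f q) : f = 1 := by
  have key : ∀ (g : Equiv.Perm (Fin n)), (∀ p q : Fin n, p < q → g p < g q) →
      ∀ i : Fin n, (i : ℕ) ≤ (g i : ℕ) := by
    intro g hg
    have H : ∀ t, ∀ i : Fin n, (i : ℕ) = t → t ≤ (g i : ℕ) := by
      intro t
      induction t with
      | zero => intro i _; omega
      | succ t iht =>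
        intro i hi
        have htn : t < n := by have := i.isLt; omega
        have hlt : (⟨t, htn⟩ : Fin n) < i := by rw [Fin.lt_def]; simp; omega
        have h1 := hg _ i hlt
        have h2 := iht ⟨t, htn⟩ rfl
        rw [Fin.lt_def] at h1
        omega
    intro i; exact H (i : ℕ) i rfl
  have hinv : ∀ p q : Fin n, p < q → f⁻¹ p < f⁻¹ q := by
    intro p q hpq
    rcases lt_trichotomy (f⁻¹ p) (f⁻¹ q) with h | h | h
    · exact h
    · exact absurd ((Equiv.injective f⁻¹) h) (ne_of_lt hpq)
    · exfalso
      have := hf _ _ h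
      simp only [Equiv.Perm.coe_inv, Equiv.apply_symm_apply] at this
      exact absurd hpq (not_lt.mpr (le_of_lt this))
  apply Equiv.ext
  intro i
  have h1 := key f hf i
  have h2 := key f⁻¹ hinv (f i)
  simp only [Equiv.Perm.coe_inv, Equiv.symm_apply_apply] at h2
  have : (f i : ℕ) = (i : ℕ) := by omega
  simpa [Equiv.Perm.one_apply] using Fin.val_injective this

lemma eq_one_of_invCount_zero {n : ℕ} (π : Equiv.Perm (Fin n)) (h : invCount n π = 0) :
    π = 1 := by
  apply strictmono_perm_eq_one
  intro p q hpq
  by_contra hc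
  have hne : π q ≠ π p := by
    intro hh
    exact absurd ((Equiv.injective π) hh).symm (ne_of_lt hpq)
  have hlt : π q < π p := lt_of_le_of_ne (not_lt.mp hc) hne
  have hmem : (p, q) ∈ (Finset.univ.filter fun p : Fin n × Fin n =>
      p.1 < p.2 ∧ π p.2 < π p.1) := by
    simp [Finset.mem_filter, hpq, hlt]
  rw [invCount, Finset.card_eq_zero] at h
  rw [h] at hmem
  simp at hmem

lemma lt_of_consec {n : ℕ} (g : Equiv.Perm (Fin n))
    (h : ∀ l (_ : 1 ≤ l) (h2 : l < n), g ⟨l - 1, by omega⟩ < g ⟨l, h2⟩) :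
    ∀ p q : Fin n, p < q → g p < g q := by
  have H : ∀ t (ht : t < n) (p : Fin n), (p : ℕ) < t → g p < g ⟨t, ht⟩ := by
    intro t
    induction t with
    | zero => intro _ p hp; omega
    | succ t iht =>
      intro ht p hp
      have step : g ⟨t, by omega⟩ < g ⟨t + 1, ht⟩ := by
        have := h (t + 1) (by omega) ht
        simpa using this
      rcases Nat.lt_or_ge (p : ℕ) t with h' | h'
      · exact lt_trans (iht (by omega) p h') step
      · have hpt : p = (⟨t, by omega⟩ : Fin n) := by
          rw [Fin.ext_iff]; simp; omega
        rw [hpt]; exact step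
  intro p q hpq
  have := H (q : ℕ) q.isLt p hpq
  simpa [Fin.eta] using this

lemma exists_descent {n : ℕ} (π : Equiv.Perm (Fin n)) (hne : π ≠ 1) :
    ∃ l, 1 ≤ l ∧ ∃ h2 : l < n, π⁻¹ ⟨l, h2⟩ < π⁻¹ ⟨l - 1, by omega⟩ := by
  by_contra hc
  push_neg at hc
  apply hne
  have hconsec : ∀ l (_ : 1 ≤ l) (h2 : l < n), π⁻¹ ⟨l - 1, by omega⟩ < π⁻¹ ⟨l, h2⟩ := by
    intro l h1 h2
    have hnot := hc l h1 h2
    have hne2 : π⁻¹ (⟨l - 1, by omega⟩ : Fin n) ≠ π⁻¹ ⟨l, h2⟩ := by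
      intro hh
      have := (Equiv.injective π⁻¹) hh
      rw [Fin.ext_iff] at this
      simp at this
      omega
    exact lt_of_le_of_ne hnot hne2
  have : π⁻¹ = 1 := strictmono_perm_eq_one π⁻¹ (lt_of_consec π⁻¹ hconsec)
  calc π = (π⁻¹)⁻¹ := (inv_inv π).symm
  _ = 1 := by rw [this]; simp

lemma blocks {n K : ℕ} (π : Equiv.Perm (Fin n))
    (huniq : ∀ l (_ : 1 ≤ l) (h2 : l < n), π⁻¹ ⟨l, h2⟩ < π⁻¹ ⟨l - 1, by omega⟩ → l = K)
    (hΦ : ¬ PhiPat n K π) : ¬ PsiPat n K π := by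
  rintro ⟨x, y, hxy, hx, hy⟩
  have hs : ∀ l (_ : 1 ≤ l) (h2 : l < n), l ≠ K →
      π⁻¹ (⟨l - 1, by omega⟩ : Fin n) < π⁻¹ ⟨l, h2⟩ := by
    intro l h1 h2 hlK
    have hnot : ¬ (π⁻¹ ⟨l, h2⟩ < π⁻¹ ⟨l - 1, by omega⟩) := fun hh => hlK (huniq l h1 h2 hh)
    have hne2 : π⁻¹ (⟨l - 1, by omega⟩ : Fin n) ≠ π⁻¹ ⟨l, h2⟩ := by
      intro hh
      have := (Equiv.injective π⁻¹) hh
      rw [Fin.ext_iff] at this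
      simp at this
      omega
    exact lt_of_le_of_ne (le_of_not_gt hnot) hne2
  have hchain : ∀ v (hv : v < n) u (hu : u < n), u ≤ v → (∀ t, u < t → t ≤ v → t ≠ K) →
      π⁻¹ (⟨u, hu⟩ : Fin n) ≤ π⁻¹ ⟨v, hv⟩ := by
    intro v
    induction v with
    | zero =>
      intro hv u hu hle _
      have : u = 0 := by omega
      subst this
      exact le_refl _
    | succ v ihv =>
      intro hv u hu hle ht
      rcases Nat.eq_or_lt_of_le hle with he | hlt
      · subst he; exact le_refl _
      · have hu' : u ≤ v := by omega
        have step : π⁻¹ (⟨v, by omega⟩ : Fin n) < π⁻¹ ⟨v + 1, hv⟩ := by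
          have := hs (v + 1) (by omega) hv (ht (v + 1) (by omega) (le_refl _))
          simpa using this
        exact le_trans (ihv (by omega) u hu hu' (fun t a bb => ht t a (by omega)))
          (le_of_lt step)
  have hVn : ((π x : Fin n) : ℕ) < n := (π x).isLt
  have hKn : K < n := by omega
  have hxv : π⁻¹ ⟨((π x : Fin n) : ℕ), hVn⟩ = x := by
    simp [Fin.eta]
  have s1 : π⁻¹ (⟨K, hKn⟩ : Fin n) < π⁻¹ ⟨K + 1, by omega⟩ := by
    have := hs (K + 1) (by omega) (by omega) (by omega)
    simpa using this
  have s2 : π⁻¹ (⟨K + 1, by omega⟩ : Fin n) ≤ π⁻¹ ⟨((π x : Fin n) : ℕ), hVn⟩ :=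
    hchain _ hVn (K + 1) (by omega) (by omega) (fun t h1 h2 => by omega)
  have s3 : π⁻¹ (⟨K, hKn⟩ : Fin n) < x := by
    rw [← hxv]
    exact lt_of_lt_of_le s1 s2
  rcases Nat.lt_or_ge ((π y : Fin n) : ℕ) K with hUK | hUK
  · exact hΦ ⟨π⁻¹ ⟨K, hKn⟩, x, y, s3, hxy, by simp [Equiv.Perm.coe_inv, Equiv.apply_symm_apply], hx, hUK⟩
  · have hUeq : ((π y : Fin n) : ℕ) = K := by omega
    have hyv : π⁻¹ ⟨((π y : Fin n) : ℕ), (π y).isLt⟩ = y := by simp [Fin.eta]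
    have hyK : y = π⁻¹ ⟨K, hKn⟩ := by
      rw [← hyv]
      congr 1
      rw [Fin.ext_iff]
      simpa using hUeq
    rw [hyK] at hxy
    exact absurd hxy (not_lt.mpr (le_of_lt s3))

lemma rejectI (n : ℕ) (w : List ℕ) : ∀ (K : ℕ) (π : Equiv.Perm (Fin n)),
    (∀ l ∈ w, 1 ≤ l ∧ l ≤ n - 1) → (w.map (adjTransposition n)).prod = π →
    w.length = invCount n π → PsiPat n K π →
    w.foldl aStep (AState.I K) = AState.sink := by
  induction w with
  | nil =>
    intro K π _ hp hl hΨ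
    exfalso
    simp only [List.map_nil, List.prod_nil] at hp
    obtain ⟨x, y, hxy, hx, hy⟩ := hΨ
    rw [← hp] at hx hy
    simp only [Equiv.Perm.one_apply] at hx hy
    rw [Fin.lt_def] at hxy
    omega
  | cons l w ih =>
    intro K π hw hp hl hΨ
    obtain ⟨h1, h2'⟩ := hw l (List.mem_cons_self (a := l) (l := w))
    have h2 : l < n := by omega
    set a : Fin n := ⟨l - 1, by omega⟩ with ha
    set b : Fin n := ⟨l, h2⟩ with hb
    have hab : (a : ℕ) + 1 = (b : ℕ) := by simp [ha, hb]; omega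
    have hadj : adjTransposition n l = Equiv.swap a b := adjT_eq a b hab
    rw [List.map_cons, List.prod_cons, hadj] at hp
    set ρ := (w.map (adjTransposition n)).prod with hρ
    have hle : invCount n ρ ≤ w.length :=
      prod_invCount_le n w (fun x hx => hw x (List.mem_cons_of_mem l hx))
    simp only [List.length_cons] at hl
    have hred : invCount n ρ = w.length := by
      rcases invCount_swap_cases a b hab ρ with ⟨_, hc⟩ | ⟨_, hc⟩ <;> rw [hp] at hc <;> omega
    rw [List.foldl_cons]
    by_cases hK : l = K + 1
    · subst hK
      rw [show aStep (AState.I K) (K + 1) = AState.sink from aStep_I_kill K]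
      exact sink_foldl w
    · rw [aStep_I_other K l hK]
      have hbne : (b : ℕ) ≠ K + 1 := by simpa [hb] using hK
      refine ih K ρ (fun x hx => hw x (List.mem_cons_of_mem l hx)) rfl hred.symm ?_
      exact psi_step a b hab hbne ρ (by rw [hp]; exact hΨ)

lemma rejectH (n : ℕ) (w : List ℕ) : ∀ (K : ℕ) (π : Equiv.Perm (Fin n)),
    (∀ l ∈ w, 1 ≤ l ∧ l ≤ n - 1) → (w.map (adjTransposition n)).prod = π →
    w.length = invCount n π → PhiPat n K π →
    w.foldl aStep (AState.H K) = AState.sink := by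
  induction w with
  | nil =>
    intro K π _ hp hl hΦ
    exfalso
    simp only [List.map_nil, List.prod_nil] at hp
    obtain ⟨p, q, r, hpq, hqr, h3, h4, h5⟩ := hΦ
    rw [← hp] at h3 h4 h5
    simp only [Equiv.Perm.one_apply] at h3 h4 h5
    rw [Fin.lt_def] at hpq hqr
    omega
  | cons l w ih =>
    intro K π hw hp hl hΦ
    obtain ⟨h1, h2'⟩ := hw l (List.mem_cons_self (a := l) (l := w))
    have h2 : l < n := by omega
    set a : Fin n := ⟨l - 1, by omega⟩ with ha
    set b : Fin n := ⟨l, h2⟩ with hb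
    have hab : (a : ℕ) + 1 = (b : ℕ) := by simp [ha, hb]; omega
    have hadj : adjTransposition n l = Equiv.swap a b := adjT_eq a b hab
    rw [List.map_cons, List.prod_cons, hadj] at hp
    set ρ := (w.map (adjTransposition n)).prod with hρ
    have hle : invCount n ρ ≤ w.length :=
      prod_invCount_le n w (fun x hx => hw x (List.mem_cons_of_mem l hx))
    simp only [List.length_cons] at hl
    have hred : ρ⁻¹ a < ρ⁻¹ b ∧ invCount n ρ = w.length := by
      rcases invCount_swap_cases a b hab ρ with ⟨hc1, hc⟩ | ⟨hc1, hc⟩ <;> rw [hp] at hc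
      · exact ⟨hc1, by omega⟩
      · omega
    have hwtail : ∀ x ∈ w, 1 ≤ x ∧ x ≤ n - 1 := fun x hx => hw x (List.mem_cons_of_mem l hx)
    rw [List.foldl_cons]
    by_cases hK1 : l = K
    · subst hK1
      rw [aStep_H_self]
      refine rejectI n w l ρ hwtail rfl hred.2.symm ?_
      exact phi_to_psi a b hab (by simp [hb]) ρ (by rw [hp]; exact hΦ)
    · by_cases hK2 : l = K + 1
      · subst hK2
        rw [aStep_H_succ]
        refine ih (K + 1) ρ hwtail rfl hred.2.symm ?_
        exact phi_climb a b hab (by simp [ha]) ρ hred.1 (by rw [hp]; exact hΦ)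
      · rw [aStep_H_other K l hK1 hK2]
        refine ih K ρ hwtail rfl hred.2.symm ?_
        exact phi_loop a b hab (by simpa [hb] using hK1) (by simpa [hb] using hK2) ρ
          (by rw [hp]; exact hΦ)

lemma constructI (n : ℕ) : ∀ (m K : ℕ) (π : Equiv.Perm (Fin n)), invCount n π = m →
    ¬ PsiPat n K π →
    ∃ w : List ℕ, (∀ l ∈ w, 1 ≤ l ∧ l ≤ n - 1) ∧ (w.map (adjTransposition n)).prod = π ∧
      w.length = m ∧ w.foldl aStep (AState.I K) ≠ AState.sink := by
  intro m
  induction m with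
  | zero =>
    intro K π hm _
    have hπ : π = 1 := eq_one_of_invCount_zero π hm
    exact ⟨[], by simp, by simp [hπ], rfl, by simp⟩
  | succ m ih =>
    intro K π hm hΨ
    have hne : π ≠ 1 := by
      intro hh; rw [hh, invCount_one] at hm; omega
    obtain ⟨l, h1, h2, hdesc⟩ := exists_descent π hne
    set a : Fin n := ⟨l - 1, by omega⟩ with ha
    set b : Fin n := ⟨l, h2⟩ with hb
    have hab : (a : ℕ) + 1 = (b : ℕ) := by simp [ha, hb]; omega
    have hlK : l ≠ K + 1 := by
      intro hh
      apply hΨ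
      refine ⟨π⁻¹ b, π⁻¹ a, hdesc, ?_, ?_⟩
      · simp only [Equiv.Perm.coe_inv, Equiv.apply_symm_apply]
        have hbv : (b : ℕ) = l := by rw [hb]
        omega
      · simp only [Equiv.Perm.coe_inv, Equiv.apply_symm_apply]
        have hav : (a : ℕ) = l - 1 := by rw [ha]
        omega
    set ρ := Equiv.swap a b * π with hρ
    have hback : Equiv.swap a b * ρ = π := swap_mul_cancel a b π
    have hinvρ : ρ⁻¹ a < ρ⁻¹ b := by
      rw [hρ, inv_swap_mul_a, inv_swap_mul_b]
      exact hdesc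
    have hc : invCount n ρ = m := by
      have := invCount_swap_succ ρ a b hab hinvρ
      rw [hback] at this
      omega
    have hbne : (b : ℕ) ≠ K + 1 := by simpa [hb] using hlK
    have hΨρ : ¬ PsiPat n K ρ := fun hh => hΨ (psi_step a b hab hbne π hh)
    obtain ⟨w, hw1, hw2, hw3, hw4⟩ := ih K ρ hc hΨρ
    refine ⟨l :: w, ?_, ?_, ?_, ?_⟩
    · intro x hx
      rcases List.mem_cons.mp hx with rfl | hx'
      · exact ⟨h1, by omega⟩
      · exact hw1 x hx'
    · rw [List.map_cons, List.prod_cons, adjT_eq a b hab, hw2, hback]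
    · simp [hw3]
    · rw [List.foldl_cons, aStep_I_other K l hlK]
      exact hw4

lemma constructH (n : ℕ) : ∀ (m K : ℕ) (π : Equiv.Perm (Fin n)), invCount n π = m →
    ¬ PhiPat n K π →
    ∃ w : List ℕ, (∀ l ∈ w, 1 ≤ l ∧ l ≤ n - 1) ∧ (w.map (adjTransposition n)).prod = π ∧
      w.length = m ∧ w.foldl aStep (AState.H K) ≠ AState.sink := by
  intro m
  induction m with
  | zero =>
    intro K π hm _
    have hπ : π = 1 := eq_one_of_invCount_zero π hm
    exact ⟨[], by simp, by simp [hπ], rfl, by simp⟩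
  | succ m ih =>
    intro K π hm hΦ
    have hne : π ≠ 1 := by
      intro hh; rw [hh, invCount_one] at hm; omega
    by_cases hD : ∃ l, 1 ≤ l ∧ l ≠ K ∧ ∃ h2 : l < n, π⁻¹ ⟨l, h2⟩ < π⁻¹ ⟨l - 1, by omega⟩
    · obtain ⟨l, h1, hlK, h2, hdesc⟩ := hD
      set a : Fin n := ⟨l - 1, by omega⟩ with ha
      set b : Fin n := ⟨l, h2⟩ with hb
      have hab : (a : ℕ) + 1 = (b : ℕ) := by simp [ha, hb]; omega
      set ρ := Equiv.swap a b * π with hρ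
      have hback : Equiv.swap a b * ρ = π := swap_mul_cancel a b π
      have hinvρ : ρ⁻¹ a < ρ⁻¹ b := by
        rw [hρ, inv_swap_mul_a, inv_swap_mul_b]
        exact hdesc
      have hc : invCount n ρ = m := by
        have := invCount_swap_succ ρ a b hab hinvρ
        rw [hback] at this
        omega
      by_cases hK1 : l = K + 1
      · have haK : (a : ℕ) = K := by simp [ha, hK1]
        have hΦρ : ¬ PhiPat n (K + 1) ρ := by
          intro hh
          exact hΦ (by rw [← hback]; exact phi_climb' a b hab haK ρ hinvρ hh)
        obtain ⟨w, hw1, hw2, hw3, hw4⟩ := ih (K + 1) ρ hc hΦρ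
        refine ⟨l :: w, ?_, ?_, ?_, ?_⟩
        · intro x hx
          rcases List.mem_cons.mp hx with rfl | hx'
          · exact ⟨h1, by omega⟩
          · exact hw1 x hx'
        · rw [List.map_cons, List.prod_cons, adjT_eq a b hab, hw2, hback]
        · simp [hw3]
        · rw [List.foldl_cons, hK1, aStep_H_succ]
          exact hw4
      · have hb1 : (b : ℕ) ≠ K := by simpa [hb] using hlK
        have hb2 : (b : ℕ) ≠ K + 1 := by simpa [hb] using hK1
        have hΦρ : ¬ PhiPat n K ρ := fun hh => hΦ (phi_loop a b hab hb1 hb2 π hh)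
        obtain ⟨w, hw1, hw2, hw3, hw4⟩ := ih K ρ hc hΦρ
        refine ⟨l :: w, ?_, ?_, ?_, ?_⟩
        · intro x hx
          rcases List.mem_cons.mp hx with rfl | hx'
          · exact ⟨h1, by omega⟩
          · exact hw1 x hx'
        · rw [List.map_cons, List.prod_cons, adjT_eq a b hab, hw2, hback]
        · simp [hw3]
        · rw [List.foldl_cons, aStep_H_other K l hlK hK1]
          exact hw4
    · push_neg at hD
      obtain ⟨l0, h1, h2, hdesc⟩ := exists_descent π hne
      have hl0K : l0 = K := by
        by_contra hcon
        exact absurd hdesc (not_lt.mpr (hD l0 h1 hcon h2))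
      subst hl0K
      have huniq : ∀ l (_ : 1 ≤ l) (h2 : l < n),
          π⁻¹ ⟨l, h2⟩ < π⁻¹ ⟨l - 1, by omega⟩ → l = l0 := by
        intro l hh1 hh2 hh3
        by_contra hcon
        exact absurd hh3 (not_lt.mpr (hD l hh1 hcon hh2))
      have hΨ : ¬ PsiPat n l0 π := blocks π huniq hΦ
      set a : Fin n := ⟨l0 - 1, by omega⟩ with ha
      set b : Fin n := ⟨l0, h2⟩ with hb
      have hab : (a : ℕ) + 1 = (b : ℕ) := by simp [ha, hb]; omega
      set ρ := Equiv.swap a b * π with hρ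
      have hback : Equiv.swap a b * ρ = π := swap_mul_cancel a b π
      have hinvρ : ρ⁻¹ a < ρ⁻¹ b := by
        rw [hρ, inv_swap_mul_a, inv_swap_mul_b]
        exact hdesc
      have hc : invCount n ρ = m := by
        have := invCount_swap_succ ρ a b hab hinvρ
        rw [hback] at this
        omega
      have hbne : (b : ℕ) ≠ l0 + 1 := by simp [hb]
      have hΨρ : ¬ PsiPat n l0 ρ := fun hh => hΨ (psi_step a b hab hbne π hh)
      obtain ⟨w, hw1, hw2, hw3, hw4⟩ := constructI n m l0 ρ hc hΨρ
      refine ⟨l0 :: w, ?_, ?_, ?_, ?_⟩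
      · intro x hx
        rcases List.mem_cons.mp hx with rfl | hx'
        · exact ⟨h1, by omega⟩
        · exact hw1 x hx'
      · rw [List.map_cons, List.prod_cons, adjT_eq a b hab, hw2, hback]
      · simp [hw3]
      · rw [List.foldl_cons, aStep_H_self]
        exact hw4

/-- Fix `n ≥ 3` and `2 ≤ j ≤ n-1`. A permutation `σ` of `{1,…,n}` (a `Fin n`
value `v` encodes the value `v+1 ∈ {1,…,n}`) admits a reduced word accepted by
the automaton `U(j)` if and only if there are no positions `p < q < r` with
`σ p = j`, `σ q > j` and `σ r < j` (that is, `σ` avoids the pattern `bca`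
with `b = j`). A reduced word for `σ` is a word `w` over `{1,…,n-1}` with
`σ = s_{w 1} · s_{w 2} ⋯ s_{w k}` (product with composition convention
`(f·g)(x) = f (g x)`) whose length is the number of inversions of `σ`. -/
theorem automaton_Uj_accepts_iff_avoids_jca (n j : ℕ)
    (hn : 3 ≤ n) (hj1 : 2 ≤ j) (hj2 : j ≤ n - 1) (σ : Equiv.Perm (Fin n)) :
    (∃ w : List ℕ, (∀ l ∈ w, 1 ≤ l ∧ l ≤ n - 1) ∧
        (w.map (adjTransposition n)).prod = σ ∧
        w.length = invCount n σ ∧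
        AcceptedByU j w) ↔
      ¬ ∃ p q r : Fin n, p < q ∧ q < r ∧
          (σ p : ℕ) + 1 = j ∧ j < (σ q : ℕ) + 1 ∧ (σ r : ℕ) + 1 < j := by
  constructor
  · rintro ⟨w, hw, hprod, hlen, hacc⟩ ⟨p, q, r, hpq, hqr, h1, h2, h3⟩
    have hΦ : PhiPat n (j - 1) σ := ⟨p, q, r, hpq, hqr, by omega, by omega, by omega⟩
    exact hacc (rejectH n w (j - 1) σ hw hprod hlen hΦ)
  · intro hno
    have hΦ : ¬ PhiPat n (j - 1) σ := by
      rintro ⟨p, q, r, hpq, hqr, h1, h2, h3⟩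
      exact hno ⟨p, q, r, hpq, hqr, by omega, by omega, by omega⟩
    obtain ⟨w, h1, h2, h3, h4⟩ := constructH n (invCount n σ) (j - 1) σ rfl hΦ
    exact ⟨w, h1, h2, h3, h4⟩
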